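/- If M is a model of M⁻ in which every nonempty Σ1^P-definable (with parameters) subclass of ω^M has an E-least element, then every nonempty Π1^P-definable (with parameters) subclass of ω^M has an E-least element. (Σ1^P-Foundation on ω implies Π1^P-Foundation on ω over M⁻.) -/
import Mathlib


universe u

/-- de Bruijn-style formulas of the language of set theory, with primitive
bounded quantifiers (`∈`-bounded and `⊆`-bounded) and unbounded quantifiers.
`SF n` is the type of formulas with (at most) `n` free variables. -/
inductive SF : ℕ → Type
  | mem {n} (i j : Fin n) : SF n
  | eq {n} (i j : Fin n) : SF n
  | not {n} (φ : SF n) : SF n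
  | and {n} (φ ψ : SF n) : SF n
  | or {n} (φ ψ : SF n) : SF n
  | bexMem {n} (i : Fin n) (φ : SF (n + 1)) : SF n
  | ballMem {n} (i : Fin n) (φ : SF (n + 1)) : SF n
  | bexSub {n} (i : Fin n) (φ : SF (n + 1)) : SF n
  | ballSub {n} (i : Fin n) (φ : SF (n + 1)) : SF n
  | ex {n} (φ : SF (n + 1)) : SF n
  | all {n} (φ : SF (n + 1)) : SF n

variable {X : Type u}

/-- `a ⊆ b` in the structure `⟨X, E⟩`. -/
def SubE (E : X → X → Prop) (a b : X) : Prop := ∀ z, E z a → E z b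

/-- Satisfaction of a formula in the structure `⟨X, E⟩` under a valuation. -/
def SF.Eval (E : X → X → Prop) : {n : ℕ} → SF n → (Fin n → X) → Prop
  | _, .mem i j, v => E (v i) (v j)
  | _, .eq i j, v => v i = v j
  | _, .not φ, v => ¬ φ.Eval E v
  | _, .and φ ψ, v => φ.Eval E v ∧ ψ.Eval E v
  | _, .or φ ψ, v => φ.Eval E v ∨ ψ.Eval E v
  | _, .bexMem i φ, v => ∃ x, E x (v i) ∧ φ.Eval E (Fin.snoc v x)
  | _, .ballMem i φ, v => ∀ x, E x (v i) → φ.Eval E (Fin.snoc v x)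
  | _, .bexSub i φ, v => ∃ x, SubE E x (v i) ∧ φ.Eval E (Fin.snoc v x)
  | _, .ballSub i φ, v => ∀ x, SubE E x (v i) → φ.Eval E (Fin.snoc v x)
  | _, .ex φ, v => ∃ x, φ.Eval E (Fin.snoc v x)
  | _, .all φ, v => ∀ x, φ.Eval E (Fin.snoc v x)

/-- `Δ₀` formulas: only `∈`-bounded quantifiers. -/
def SF.IsDelta0 : {n : ℕ} → SF n → Prop
  | _, .mem _ _ => True
  | _, .eq _ _ => True
  | _, .not φ => φ.IsDelta0
  | _, .and φ ψ => φ.IsDelta0 ∧ ψ.IsDelta0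
  | _, .or φ ψ => φ.IsDelta0 ∧ ψ.IsDelta0
  | _, .bexMem _ φ => φ.IsDelta0
  | _, .ballMem _ φ => φ.IsDelta0
  | _, .bexSub _ _ => False
  | _, .ballSub _ _ => False
  | _, .ex _ => False
  | _, .all _ => False

/-- Takahashi's class `Δ₀^𝒫`: only `∈`-bounded and `⊆`-bounded quantifiers. -/
def SF.IsDelta0P : {n : ℕ} → SF n → Prop
  | _, .mem _ _ => True
  | _, .eq _ _ => True
  | _, .not φ => φ.IsDelta0P
  | _, .and φ ψ => φ.IsDelta0P ∧ ψ.IsDelta0P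
  | _, .or φ ψ => φ.IsDelta0P ∧ ψ.IsDelta0P
  | _, .bexMem _ φ => φ.IsDelta0P
  | _, .ballMem _ φ => φ.IsDelta0P
  | _, .bexSub _ φ => φ.IsDelta0P
  | _, .ballSub _ φ => φ.IsDelta0P
  | _, .ex _ => False
  | _, .all _ => False

def Delta0C : ∀ n, SF n → Prop := fun _ φ => φ.IsDelta0
def Delta0PC : ∀ n, SF n → Prop := fun _ φ => φ.IsDelta0P
def Sigma1C : ∀ n, SF n → Prop := fun _ φ => ∃ ψ, ψ.IsDelta0 ∧ φ = SF.ex ψ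
def Pi1C : ∀ n, SF n → Prop := fun _ φ => ∃ ψ, ψ.IsDelta0 ∧ φ = SF.all ψ
def Sigma1PC : ∀ n, SF n → Prop := fun _ φ => ∃ ψ, ψ.IsDelta0P ∧ φ = SF.ex ψ
def Pi1PC : ∀ n, SF n → Prop := fun _ φ => ∃ ψ, ψ.IsDelta0P ∧ φ = SF.all ψ
def FullC : ∀ n, SF n → Prop := fun _ _ => True

/-- A Gödel numbering of formulas. -/
def SF.encode : {n : ℕ} → SF n → ℕ
  | _, .mem i j => Nat.pair 0 (Nat.pair i.val j.val)
  | _, .eq i j => Nat.pair 1 (Nat.pair i.val j.val)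
  | _, .not φ => Nat.pair 2 φ.encode
  | _, .and φ ψ => Nat.pair 3 (Nat.pair φ.encode ψ.encode)
  | _, .or φ ψ => Nat.pair 4 (Nat.pair φ.encode ψ.encode)
  | _, .bexMem i φ => Nat.pair 5 (Nat.pair i.val φ.encode)
  | _, .ballMem i φ => Nat.pair 6 (Nat.pair i.val φ.encode)
  | _, .bexSub i φ => Nat.pair 7 (Nat.pair i.val φ.encode)
  | _, .ballSub i φ => Nat.pair 8 (Nat.pair i.val φ.encode)
  | _, .ex φ => Nat.pair 9 φ.encode
  | _, .all φ => Nat.pair 10 φ.encode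

/-- A theory (set of sentences) is recursively enumerable if the set of Gödel
numbers of its members is the domain of a partial recursive function. -/
def REset (S : Set (SF 0)) : Prop :=
  ∃ f : ℕ →. ℕ, Nat.Partrec f ∧ ∀ φ : SF 0, φ ∈ S ↔ SF.encode φ ∈ f.Dom

/-- `⟨X, E⟩ ⊨ S` for a set `S` of sentences. -/
def SatT (E : X → X → Prop) (S : Set (SF 0)) : Prop :=
  ∀ φ ∈ S, SF.Eval E φ (fun i => i.elim0)

/-! ## Axioms and axiom schemes -/

def ExtensionalityAx (E : X → X → Prop) : Prop := ∀ a b, (∀ z, E z a ↔ E z b) → a = b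
def EmptySetAx (E : X → X → Prop) : Prop := ∃ a, ∀ z, ¬ E z a
def PairAx (E : X → X → Prop) : Prop := ∀ x y, ∃ a, ∀ z, E z a ↔ (z = x ∨ z = y)
def UnionAx (E : X → X → Prop) : Prop := ∀ a, ∃ b, ∀ z, E z b ↔ ∃ y, E y a ∧ E z y
def SetDiffAx (E : X → X → Prop) : Prop := ∀ a b, ∃ c, ∀ z, E z c ↔ (E z a ∧ ¬ E z b)
def PowerAx (E : X → X → Prop) : Prop := ∀ a, ∃ p, ∀ z, E z p ↔ SubE E z a
def TransSet (E : X → X → Prop) (t : X) : Prop := ∀ y, E y t → ∀ z, E z y → E z t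
def TCoAx (E : X → X → Prop) : Prop := ∀ a, ∃ t, TransSet E t ∧ SubE E a t
def SuccOf (E : X → X → Prop) (x s : X) : Prop := ∀ z, E z s ↔ (E z x ∨ z = x)
def InductiveSet (E : X → X → Prop) (a : X) : Prop :=
  (∃ e, E e a ∧ ∀ z, ¬ E z e) ∧ ∀ x, E x a → ∃ s, E s a ∧ SuccOf E x s
def InfinityAx (E : X → X → Prop) : Prop := ∃ a, InductiveSet E a
def SetFoundationAx (E : X → X → Prop) : Prop :=
  ∀ z, (∃ x, E x z) → ∃ y, E y z ∧ ∀ x, E x y → ¬ E x z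
/-- The axiom of choice: every set of pairwise disjoint nonempty sets has a transversal. -/
def ACAx (E : X → X → Prop) : Prop :=
  ∀ a, (∀ x, E x a → ∃ z, E z x) →
    (∀ x y, E x a → E y a → x ≠ y → ∀ z, E z x → ¬ E z y) →
    ∃ c, ∀ x, E x a → ∃! z, E z c ∧ E z x

def SeparationScheme (E : X → X → Prop) (C : ∀ n, SF n → Prop) : Prop :=
  ∀ (n : ℕ) (φ : SF (n + 1)), C _ φ → ∀ (p : Fin n → X) (w : X),
    ∃ y, ∀ x, E x y ↔ (E x w ∧ φ.Eval E (Fin.snoc p x))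

def CollectionScheme (E : X → X → Prop) (C : ∀ n, SF n → Prop) : Prop :=
  ∀ (n : ℕ) (φ : SF (n + 2)), C _ φ → ∀ (p : Fin n → X) (w : X),
    (∀ x, E x w → ∃ y, φ.Eval E (Fin.snoc (Fin.snoc p x) y)) →
    ∃ c, ∀ x, E x w → ∃ y, E y c ∧ φ.Eval E (Fin.snoc (Fin.snoc p x) y)

def FoundationScheme (E : X → X → Prop) (C : ∀ n, SF n → Prop) : Prop :=
  ∀ (n : ℕ) (φ : SF (n + 1)), C _ φ → ∀ p : Fin n → X,
    (∃ x, φ.Eval E (Fin.snoc p x)) →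
    ∃ y, φ.Eval E (Fin.snoc p y) ∧ ∀ x, E x y → ¬ φ.Eval E (Fin.snoc p x)

/-! ## Theories -/

def ModelMminus (E : X → X → Prop) : Prop :=
  ExtensionalityAx E ∧ EmptySetAx E ∧ PairAx E ∧ UnionAx E ∧ SetDiffAx E ∧
    TCoAx E ∧ InfinityAx E ∧ SeparationScheme E Delta0C ∧ SetFoundationAx E

def ModelM (E : X → X → Prop) : Prop := ModelMminus E ∧ PowerAx E

def ModelKP (E : X → X → Prop) : Prop :=
  ExtensionalityAx E ∧ PairAx E ∧ UnionAx E ∧ SeparationScheme E Delta0C ∧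
    CollectionScheme E Delta0C ∧ FoundationScheme E Pi1C

def ModelKPP (E : X → X → Prop) : Prop :=
  ModelM E ∧ CollectionScheme E Delta0PC ∧ FoundationScheme E Pi1PC

def ModelMOST (E : X → X → Prop) : Prop :=
  ModelM E ∧ SeparationScheme E Sigma1C ∧ ACAx E

def ModelZF (E : X → X → Prop) : Prop :=
  ExtensionalityAx E ∧ EmptySetAx E ∧ PairAx E ∧ UnionAx E ∧ PowerAx E ∧
    InfinityAx E ∧ SeparationScheme E FullC ∧ CollectionScheme E FullC ∧
    FoundationScheme E FullC

/-! ## Internal set-theoretic machinery -/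

/-- `p = {{x}, {x, y}}` (Kuratowski pair). -/
def IsPair (E : X → X → Prop) (p x y : X) : Prop :=
  ∀ z, E z p ↔ ((∀ w, E w z ↔ w = x) ∨ (∀ w, E w z ↔ (w = x ∨ w = y)))

def FunApp (E : X → X → Prop) (f x y : X) : Prop := ∃ q, E q f ∧ IsPair E q x y

/-- `f` is a function with domain `d`. -/
def IsFuncOn (E : X → X → Prop) (f d : X) : Prop :=
  (∀ q, E q f → ∃ x y, IsPair E q x y ∧ E x d) ∧
  (∀ x y y', FunApp E f x y → FunApp E f x y' → y = y') ∧
  (∀ x, E x d → ∃ y, FunApp E f x y)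

/-- `f` is an injective function from `dom` into `cod`. -/
def InjFunInto (E : X → X → Prop) (f dom cod : X) : Prop :=
  IsFuncOn E f dom ∧ (∀ x y, FunApp E f x y → E y cod) ∧
  (∀ x x' y, FunApp E f x y → FunApp E f x' y → x = x')

/-- `|t| ≤ |κ|`. -/
def CardLe (E : X → X → Prop) (t κ : X) : Prop := ∃ f, InjFunInto E f t κ

def IsOrdinal (E : X → X → Prop) (x : X) : Prop :=
  TransSet E x ∧ ∀ y, E y x → TransSet E y

/-- An (initial ordinal =) cardinal: an ordinal that does not inject into any of
its members. -/
def IsCardinal (E : X → X → Prop) (κ : X) : Prop :=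
  IsOrdinal E κ ∧ ∀ β, E β κ → ¬ CardLe E κ β

/-- `t` is the transitive closure of the set `x`. -/
def IsTCset (E : X → X → Prop) (t x : X) : Prop :=
  TransSet E t ∧ SubE E x t ∧ ∀ u, TransSet E u → SubE E x u → SubE E t u

/-- `t` is the transitive closure of `{x}`. -/
def IsTCsingleton (E : X → X → Prop) (t x : X) : Prop :=
  TransSet E t ∧ E x t ∧ ∀ u, TransSet E u → E x u → SubE E t u

def IsOmega (E : X → X → Prop) (w : X) : Prop :=
  InductiveSet E w ∧ ∀ a, InductiveSet E a → SubE E w a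

/-- `⟨X, E⟩` is `ω`-standard: its internal natural numbers are order-isomorphic
to the standard natural numbers. -/
def OmegaStandard (E : X → X → Prop) : Prop :=
  ∀ w, IsOmega E w → ∃ f : ℕ → X, (∀ n, E (f n) w) ∧ (∀ x, E x w → ∃ n, x = f n) ∧
    ∀ m n : ℕ, (E (f m) (f n) ↔ m < n)

/-- `f` is (a function coding) the cumulative hierarchy `β ↦ V_β` for `β ∈ α`,
using `V_β = ⋃_{γ∈β} 𝒫(V_γ)`. -/
def IsRK (E : X → X → Prop) (α f : X) : Prop :=
  IsOrdinal E α ∧ IsFuncOn E f α ∧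
  ∀ β vβ, E β α → FunApp E f β vβ →
    ∀ x, E x vβ ↔ ∃ γ, E γ β ∧ ∃ vγ, FunApp E f γ vγ ∧ SubE E x vγ

/-- Internal rank comparison `ρ(x) ≤ ρ(y)`: `x` belongs to every stage of the
cumulative hierarchy that `y` belongs to. -/
def RankLe (E : X → X → Prop) (x y : X) : Prop :=
  ∀ α f β v, IsRK E α f → E β α → FunApp E f β v → E y v → E x v

/-- External `n`-th von Neumann natural number. -/
def IsVN (E : X → X → Prop) : ℕ → X → Prop
  | 0, x => ∀ z, ¬ E z x
  | (n + 1), x => ∃ y, IsVN E n y ∧ SuccOf E y x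

/-- `a` is the `n`-th infinite cardinal `ℵ_n` (for external `n`, as computed in
the model): `ℵ₀ = ω`, and `ℵ_{n+1}` is the least cardinal above `ℵ_n`. -/
def IsAleph (E : X → X → Prop) : ℕ → X → Prop
  | 0, a => IsOmega E a
  | (n + 1), a => ∃ b, IsAleph E n b ∧ IsCardinal E a ∧ E b a ∧
      ∀ c, IsCardinal E c → E b c → (c = a ∨ E a c)

/-- `a` is the cardinal `ℵ_ω` of the model: the least limit cardinal above `ω`. -/
def IsAlephOmega (E : X → X → Prop) (a : X) : Prop :=
  (IsCardinal E a ∧ (∃ w, IsOmega E w ∧ E w a) ∧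
    (∀ β, E β a → ∃ μ, IsCardinal E μ ∧ E β μ ∧ E μ a)) ∧
  ∀ a', (IsCardinal E a' ∧ (∃ w, IsOmega E w ∧ E w a') ∧
    (∀ β, E β a' → ∃ μ, IsCardinal E μ ∧ E β μ ∧ E μ a')) → (a = a' ∨ E a a')

/-! ## Internal satisfaction and the constructible hierarchy (for `V = L`) -/

/-- `c = ⟨n, a⟩` with the tag `n` an external natural (internally coded). -/
def TaggedBy (E : X → X → Prop) (c : X) (n : ℕ) (a : X) : Prop :=
  ∃ t, IsVN E n t ∧ IsPair E c t a

def CodeMem (E : X → X → Prop) (c i j : X) : Prop := ∃ p, IsPair E p i j ∧ TaggedBy E c 0 p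
def CodeEq (E : X → X → Prop) (c i j : X) : Prop := ∃ p, IsPair E p i j ∧ TaggedBy E c 1 p
def CodeNot (E : X → X → Prop) (c' c : X) : Prop := TaggedBy E c' 2 c
def CodeAnd (E : X → X → Prop) (c' c₁ c₂ : X) : Prop := ∃ p, IsPair E p c₁ c₂ ∧ TaggedBy E c' 3 p
def CodeEx (E : X → X → Prop) (c' i c : X) : Prop := ∃ p, IsPair E p i c ∧ TaggedBy E c' 4 p

/-- `d` is closed under the internal formation rules for codes of formulas with
variables indexed by elements of `w` (the internal `ω`). -/
def ClosedCode (E : X → X → Prop) (w d : X) : Prop :=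
  (∀ i j c, E i w → E j w → CodeMem E c i j → E c d) ∧
  (∀ i j c, E i w → E j w → CodeEq E c i j → E c d) ∧
  (∀ c c', E c d → CodeNot E c' c → E c' d) ∧
  (∀ c₁ c₂ c', E c₁ d → E c₂ d → CodeAnd E c' c₁ c₂ → E c' d) ∧
  (∀ i c c', E i w → E c d → CodeEx E c' i c → E c' d)

/-- `c` is an internal code of a first-order formula of the language of set theory. -/
def FormCode (E : X → X → Prop) (w c : X) : Prop := ∀ d, ClosedCode E w d → E c d

/-- An internal assignment of elements of `a` to the variables. -/
def IsAssign (E : X → X → Prop) (w a v : X) : Prop :=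
  IsFuncOn E v w ∧ ∀ i y, FunApp E v i y → E y a

/-- `v' = v[i ↦ x]`. -/
def UpdateAssign (E : X → X → Prop) (w v : X) (i x v' : X) : Prop :=
  FunApp E v' i x ∧ ∀ j, E j w → j ≠ i → ∀ y, (FunApp E v j y ↔ FunApp E v' j y)

def PairIn (E : X → X → Prop) (s c v : X) : Prop := ∃ q, E q s ∧ IsPair E q c v

/-- `s` is a (full) satisfaction class for the set structure `⟨a, E⟩`: a set of
pairs ⟨code, assignment⟩ obeying the Tarski conditions. -/
def SatSet (E : X → X → Prop) (w a s : X) : Prop :=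
  (∀ q, E q s → ∃ c v, IsPair E q c v ∧ FormCode E w c ∧ IsAssign E w a v) ∧
  (∀ i j c v xi xj, E i w → E j w → CodeMem E c i j → IsAssign E w a v →
    FunApp E v i xi → FunApp E v j xj → (PairIn E s c v ↔ E xi xj)) ∧
  (∀ i j c v xi xj, E i w → E j w → CodeEq E c i j → IsAssign E w a v →
    FunApp E v i xi → FunApp E v j xj → (PairIn E s c v ↔ xi = xj)) ∧
  (∀ c c' v, FormCode E w c → CodeNot E c' c → IsAssign E w a v →
    (PairIn E s c' v ↔ ¬ PairIn E s c v)) ∧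
  (∀ c₁ c₂ c' v, FormCode E w c₁ → FormCode E w c₂ → CodeAnd E c' c₁ c₂ →
    IsAssign E w a v → (PairIn E s c' v ↔ (PairIn E s c₁ v ∧ PairIn E s c₂ v))) ∧
  (∀ i c c' v, E i w → FormCode E w c → CodeEx E c' i c → IsAssign E w a v →
    (PairIn E s c' v ↔ ∃ x v', E x a ∧ IsAssign E w a v' ∧ UpdateAssign E w v i x v' ∧
      PairIn E s c v'))

/-- `b` is a subset of `a` definable over `⟨a, E⟩` (with parameters from `a`). -/
def DefSub (E : X → X → Prop) (w a s b : X) : Prop :=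
  SubE E b a ∧ ∃ c, FormCode E w c ∧ ∃ v, IsAssign E w a v ∧ ∃ i, E i w ∧
    ∀ x, E x b ↔ (E x a ∧ ∃ v', IsAssign E w a v' ∧ UpdateAssign E w v i x v' ∧
      PairIn E s c v')

/-- `f` codes the constructible hierarchy `β ↦ L_β` for `β ∈ α`, using
`L_β = ⋃_{γ∈β} Def(L_γ)`. -/
def IsLHier (E : X → X → Prop) (w f α : X) : Prop :=
  IsOrdinal E α ∧ IsFuncOn E f α ∧
  ∀ β vβ, E β α → FunApp E f β vβ →
    ∀ x, E x vβ ↔ ∃ γ, E γ β ∧ ∃ vγ, FunApp E f γ vγ ∧ ∃ s, SatSet E w vγ s ∧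
      DefSub E w vγ s x

/-- The axiom `V = L`: every set belongs to some level of the constructible hierarchy. -/
def VeqL (E : X → X → Prop) : Prop :=
  ∀ w, IsOmega E w → ∀ x, ∃ α f β vβ, IsLHier E w f α ∧ E β α ∧ FunApp E f β vβ ∧ E x vβ

/-! ## Extensions -/

/-- The substructure of `⟨X, E⟩` with underlying set `A`. -/
def restrict (E : X → X → Prop) (A : Set X) : A → A → Prop := fun a b => E a.1 b.1

/-- `B` is an end extension of `A` (both substructures of an ambient `⟨X, E⟩`). -/
def EndExtIn (E : X → X → Prop) (A B : Set X) : Prop :=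
  A ⊆ B ∧ ∀ x y, x ∈ B → y ∈ A → E x y → x ∈ A

/-- `B` is a powerset-preserving end extension of `A` (within an ambient `⟨X, E⟩`);
`x ⊆ y` is computed in `B`. -/
def PowExtIn (E : X → X → Prop) (A B : Set X) : Prop :=
  EndExtIn E A B ∧ ∀ x y, x ∈ B → y ∈ A → (∀ z, z ∈ B → E z x → E z y) → x ∈ A

/-- The whole structure `⟨X, E⟩` is an end extension of its substructure on `A`. -/
def EndExtSet (E : X → X → Prop) (A : Set X) : Prop :=
  ∀ x y, y ∈ A → E x y → x ∈ A

/-- `⟨X, E⟩` is a powerset-preserving end extension of its substructure on `A`. -/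
def PowExtSet (E : X → X → Prop) (A : Set X) : Prop :=
  EndExtSet E A ∧ ∀ x y, y ∈ A → SubE E x y → x ∈ A

/-- `⟨X, E⟩` is a rank extension of its substructure on `A`. -/
def RankExtSet (E : X → X → Prop) (A : Set X) : Prop :=
  PowExtSet E A ∧ ∀ x y, y ∈ A → RankLe E x y → x ∈ A

/-- The extension `⟨X, E⟩` of its substructure on `A` is proper and topless. -/
def ToplessSet (E : X → X → Prop) (A : Set X) : Prop :=
  A ≠ Set.univ ∧ ∀ c, (∀ x, E x c → x ∈ A) → c ∈ A

/-- The extension `⟨X, E⟩` of its substructure on `A` is proper and blunt (not topless). -/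
def BluntSet (E : X → X → Prop) (A : Set X) : Prop :=
  A ≠ Set.univ ∧ ¬ ToplessSet E A

/-! ## Weak dependent choice -/

/-- `δ_ω^φ(b, f, p)`: `f` is a function on `ω` with `f(0) = {b}` tracing the
`φ`-successor relation. -/
def IsWDCWitness (E : X → X → Prop) {n : ℕ} (φ : SF (n + 2)) (p : Fin n → X)
    (w b f : X) : Prop :=
  IsFuncOn E f w ∧
  (∃ z v, (∀ u, ¬ E u z) ∧ E z w ∧ FunApp E f z v ∧ ∀ t, E t v ↔ t = b) ∧
  ∀ m m' vm vm', E m w → SuccOf E m m' → E m' w → FunApp E f m vm → FunApp E f m' vm' →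
    ((∀ x, E x vm → ∃ y, E y vm' ∧ φ.Eval E (Fin.snoc (Fin.snoc p x) y)) ∧
     (∀ y, E y vm' → ∀ x, E x vm → φ.Eval E (Fin.snoc (Fin.snoc p x) y)))

/-- The scheme `Δ₀^𝒫-WDC_ω`. -/
def WDComega (E : X → X → Prop) : Prop :=
  ∀ (n : ℕ) (φ : SF (n + 2)), Delta0PC _ φ → ∀ p : Fin n → X,
    (∀ x, ∃ y, φ.Eval E (Fin.snoc (Fin.snoc p x) y)) →
    ∀ w, IsOmega E w → ∀ b, ∃ f, IsWDCWitness E φ p w b f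

/-! ## Internal well-founded extensional relations (for `H_{≤κ}`) -/

def RRel (E : X → X → Prop) (R a b : X) : Prop := ∃ p, E p R ∧ IsPair E p a b

def RelOn (E : X → X → Prop) (R k : X) : Prop :=
  ∀ p, E p R → ∃ a b, IsPair E p a b ∧ E a k ∧ E b k

/-- `BFEXT(R, k)`: `R ⊆ k × k` is extensional on `k`, has a top element, and every
nonempty subset of `k` has an `R`-minimal element. -/
def BFEXT (E : X → X → Prop) (R k : X) : Prop :=
  RelOn E R k ∧
  (∀ a b, E a k → E b k → (∀ c, E c k → (RRel E R c a ↔ RRel E R c b)) → a = b) ∧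
  (∃ t, E t k ∧ ∀ b, E b k → b ≠ t → RRel E R b t) ∧
  (∀ S, SubE E S k → (∃ z, E z S) → ∃ m, E m S ∧ ∀ y, E y S → ¬ RRel E R y m)

/-- `f` is an isomorphism of `⟨k, R⟩` with `⟨T, ∈⟩`. -/
def IsoOnto (E : X → X → Prop) (R k f T : X) : Prop :=
  IsFuncOn E f k ∧ (∀ x y, FunApp E f x y → E y T) ∧
  (∀ y, E y T → ∃ x, E x k ∧ FunApp E f x y) ∧
  (∀ x x' y, FunApp E f x y → FunApp E f x' y → x = x') ∧
  ∀ a b ya yb, E a k → E b k → FunApp E f a ya → FunApp E f b yb →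
    (RRel E R a b ↔ E ya yb)

/-- The predicate `Xv = H_{≤κ} = {x : |TC(x)| ≤ κ}`. -/
def HleqPred (E : X → X → Prop) (Xv κ : X) : Prop :=
  IsCardinal E κ ∧ ∀ x, E x Xv ↔ ∃ t, IsTCset E t x ∧ CardLe E t κ

/-- The explicit conjunction (i) ∧ (ii) ∧ (iii) asserting `Xv = H_{≤κ}`. -/
def ExplicitH (E : X → X → Prop) (Xv κ : X) : Prop :=
  IsCardinal E κ ∧
  (∀ R, BFEXT E R κ → ∃ x f T, E x Xv ∧ E f Xv ∧ E T Xv ∧ IsTCsingleton E T x ∧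
    IsoOnto E R κ f T) ∧
  (∀ x, E x Xv → ∃ T f, E T Xv ∧ E f Xv ∧ IsTCsingleton E T x ∧ InjFunInto E f T κ)

/-! ### Auxiliary machinery for Statement 5 -/

section Aux

lemma snoc_val_lt {m : ℕ} (v : Fin m → X) (t : X) (j : ℕ) (h : j < m) (h' : j < m + 1) :
    (Fin.snoc v t : Fin (m+1) → X) ⟨j, h'⟩ = v ⟨j, h⟩ := by
  have : (⟨j, h'⟩ : Fin (m+1)) = Fin.castSucc ⟨j, h⟩ := rfl
  rw [this, Fin.snoc_castSucc]

lemma snoc_val_last {m : ℕ} (v : Fin m → X) (t : X) (h' : m < m + 1) :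
    (Fin.snoc v t : Fin (m+1) → X) ⟨m, h'⟩ = t := by
  have : (⟨m, h'⟩ : Fin (m+1)) = Fin.last m := rfl
  rw [this, Fin.snoc_last]

/-- Extend a renaming under one binder. -/
def extRen {a b : ℕ} (ρ : Fin a → Fin b) : Fin (a+1) → Fin (b+1) :=
  Fin.snoc (fun i => Fin.castSucc (ρ i)) (Fin.last b)

/-- Renaming (variable substitution by a map of indices). -/
def SF.rename : {a b : ℕ} → (Fin a → Fin b) → SF a → SF b
  | _, _, ρ, .mem i j => .mem (ρ i) (ρ j)
  | _, _, ρ, .eq i j => .eq (ρ i) (ρ j)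
  | _, _, ρ, .not φ => .not (φ.rename ρ)
  | _, _, ρ, .and φ ψ => .and (φ.rename ρ) (ψ.rename ρ)
  | _, _, ρ, .or φ ψ => .or (φ.rename ρ) (ψ.rename ρ)
  | _, _, ρ, .bexMem i φ => .bexMem (ρ i) (φ.rename (extRen ρ))
  | _, _, ρ, .ballMem i φ => .ballMem (ρ i) (φ.rename (extRen ρ))
  | _, _, ρ, .bexSub i φ => .bexSub (ρ i) (φ.rename (extRen ρ))
  | _, _, ρ, .ballSub i φ => .ballSub (ρ i) (φ.rename (extRen ρ))
  | _, _, ρ, .ex φ => .ex (φ.rename (extRen ρ))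
  | _, _, ρ, .all φ => .all (φ.rename (extRen ρ))

lemma snoc_comp_extRen {a b : ℕ} (ρ : Fin a → Fin b) (v : Fin b → X) (x : X) :
    (Fin.snoc v x : Fin (b+1) → X) ∘ extRen ρ = Fin.snoc (v ∘ ρ) x := by
  funext i
  refine Fin.lastCases ?_ (fun i => ?_) i
  · simp [extRen, Fin.snoc_last]
  · simp [extRen, Fin.snoc_castSucc]

lemma eval_rename (E : X → X → Prop) : ∀ {a b : ℕ} (φ : SF a) (ρ : Fin a → Fin b)
    (v : Fin b → X), (φ.rename ρ).Eval E v ↔ φ.Eval E (v ∘ ρ)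
  | _, _, .mem i j, ρ, v => Iff.rfl
  | _, _, .eq i j, ρ, v => Iff.rfl
  | _, _, .not φ, ρ, v => by simp [SF.rename, SF.Eval, eval_rename E φ ρ v]
  | _, _, .and φ ψ, ρ, v => by
      simp [SF.rename, SF.Eval, eval_rename E φ ρ v, eval_rename E ψ ρ v]
  | _, _, .or φ ψ, ρ, v => by
      simp [SF.rename, SF.Eval, eval_rename E φ ρ v, eval_rename E ψ ρ v]
  | _, _, .bexMem i φ, ρ, v => by
      simp only [SF.rename, SF.Eval]
      refine exists_congr fun x => and_congr Iff.rfl ?_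
      rw [eval_rename E φ (extRen ρ) (Fin.snoc v x), snoc_comp_extRen]
  | _, _, .ballMem i φ, ρ, v => by
      simp only [SF.rename, SF.Eval]
      refine forall_congr' fun x => imp_congr Iff.rfl ?_
      rw [eval_rename E φ (extRen ρ) (Fin.snoc v x), snoc_comp_extRen]
  | _, _, .bexSub i φ, ρ, v => by
      simp only [SF.rename, SF.Eval]
      refine exists_congr fun x => and_congr Iff.rfl ?_
      rw [eval_rename E φ (extRen ρ) (Fin.snoc v x), snoc_comp_extRen]
  | _, _, .ballSub i φ, ρ, v => by
      simp only [SF.rename, SF.Eval]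
      refine forall_congr' fun x => imp_congr Iff.rfl ?_
      rw [eval_rename E φ (extRen ρ) (Fin.snoc v x), snoc_comp_extRen]
  | _, _, .ex φ, ρ, v => by
      simp only [SF.rename, SF.Eval]
      refine exists_congr fun x => ?_
      rw [eval_rename E φ (extRen ρ) (Fin.snoc v x), snoc_comp_extRen]
  | _, _, .all φ, ρ, v => by
      simp only [SF.rename, SF.Eval]
      refine forall_congr' fun x => ?_
      rw [eval_rename E φ (extRen ρ) (Fin.snoc v x), snoc_comp_extRen]

lemma isDelta0P_rename : ∀ {a b : ℕ} (φ : SF a) (ρ : Fin a → Fin b),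
    φ.IsDelta0P → (φ.rename ρ).IsDelta0P
  | _, _, .mem i j, ρ, h => trivial
  | _, _, .eq i j, ρ, h => trivial
  | _, _, .not φ, ρ, h => isDelta0P_rename φ ρ h
  | _, _, .and φ ψ, ρ, h => ⟨isDelta0P_rename φ ρ h.1, isDelta0P_rename ψ ρ h.2⟩
  | _, _, .or φ ψ, ρ, h => ⟨isDelta0P_rename φ ρ h.1, isDelta0P_rename ψ ρ h.2⟩
  | _, _, .bexMem i φ, ρ, h => isDelta0P_rename φ (extRen ρ) h
  | _, _, .ballMem i φ, ρ, h => isDelta0P_rename φ (extRen ρ) h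
  | _, _, .bexSub i φ, ρ, h => isDelta0P_rename φ (extRen ρ) h
  | _, _, .ballSub i φ, ρ, h => isDelta0P_rename φ (extRen ρ) h

end Aux

section Model

variable {E : X → X → Prop}

lemma mkSing (hPair : PairAx E) (a : X) : ∃ s, ∀ t, E t s ↔ t = a := by
  obtain ⟨s, hs⟩ := hPair a a
  exact ⟨s, fun t => by simp [hs t]⟩

lemma mkAdjoin (hPair : PairAx E) (hUnion : UnionAx E) (a b : X) :
    ∃ u, ∀ t, E t u ↔ (E t a ∨ t = b) := by
  obtain ⟨sb, hsb⟩ := mkSing hPair b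
  obtain ⟨pr, hpr⟩ := hPair a sb
  obtain ⟨u, hu⟩ := hUnion pr
  refine ⟨u, fun t => ?_⟩
  rw [hu t]
  constructor
  · rintro ⟨y, hy1, hy2⟩
    rcases (hpr y).1 hy1 with rfl | rfl
    · exact Or.inl hy2
    · exact Or.inr ((hsb t).1 hy2)
  · rintro (h | rfl)
    · exact ⟨a, (hpr a).2 (Or.inl rfl), h⟩
    · exact ⟨sb, (hpr sb).2 (Or.inr rfl), (hsb t).2 rfl⟩

lemma mkKPair (hExt : ExtensionalityAx E) (hPair : PairAx E) (a b : X) :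
    ∃ q, IsPair E q a b := by
  obtain ⟨sa, hsa⟩ := mkSing hPair a
  obtain ⟨pab, hpab⟩ := hPair a b
  obtain ⟨q, hq⟩ := hPair sa pab
  refine ⟨q, fun z => ?_⟩
  rw [hq z]
  constructor
  · rintro (rfl | rfl)
    · exact Or.inl hsa
    · exact Or.inr hpab
  · rintro (h | h)
    · exact Or.inl (hExt z sa (fun t => (h t).trans (hsa t).symm))
    · exact Or.inr (hExt z pab (fun t => (h t).trans (hpab t).symm))

lemma kpair_unique (hExt : ExtensionalityAx E) (hPair : PairAx E) {q a b a' b' : X}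
    (h1 : IsPair E q a b) (h2 : IsPair E q a' b') : a = a' ∧ b = b' := by
  obtain ⟨sa, hsa⟩ := mkSing hPair a
  have hsaq : E sa q := (h1 sa).2 (Or.inl (fun t => hsa t))
  have haa' : a = a' := by
    rcases (h2 sa).1 hsaq with h | h
    · exact ((h a).1 ((hsa a).2 rfl)).symm ▸ rfl
    · rcases (h a).1 ((hsa a).2 rfl) with h' | h'
      · exact h'
      · -- a = b'; also a' ∈ sa would give a' = a
        have : a' = a := (hsa a').1 ((h a').2 (Or.inl rfl))
        exact this.symm
  obtain ⟨pab, hpab⟩ := hPair a b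
  have hpabq : E pab q := (h1 pab).2 (Or.inr (fun t => hpab t))
  obtain ⟨pab', hpab'⟩ := hPair a' b'
  have hpabq' : E pab' q := (h2 pab').2 (Or.inr (fun t => hpab' t))
  refine ⟨haa', ?_⟩
  rcases (h2 pab).1 hpabq with h | h
  · -- pab = {a'}: b = a' = a
    have hb : b = a' := (h b).1 ((hpab b).2 (Or.inr rfl))
    -- now look at pab' through h1
    rcases (h1 pab').1 hpabq' with h' | h'
    · have : b' = a := (h' b').1 ((hpab' b').2 (Or.inr rfl))
      rw [hb, ← haa', this]
    · rcases (h' b').1 ((hpab' b').2 (Or.inr rfl)) with h'' | h''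
      · rw [hb, ← haa', h'']
      · exact h''.symm
  · rcases (h b).1 ((hpab b).2 (Or.inr rfl)) with h' | h'
    · -- b = a' = a
      rcases (h1 pab').1 hpabq' with h'' | h''
      · have : b' = a := (h'' b').1 ((hpab' b').2 (Or.inr rfl))
        rw [h', ← haa', this]
      · rcases (h'' b').1 ((hpab' b').2 (Or.inr rfl)) with h3 | h3
        · rw [h', ← haa', h3]
        · exact h3.symm
    · exact h'

lemma no_self_mem (hPair : PairAx E) (hFound : SetFoundationAx E) (x : X) : ¬ E x x := by
  intro hxx
  obtain ⟨s, hs⟩ := mkSing hPair x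
  obtain ⟨y, hy, hmin⟩ := hFound s ⟨x, (hs x).2 rfl⟩
  have hyx : y = x := (hs y).1 hy
  exact hmin x (by rwa [hyx]) ((hs x).2 rfl)

lemma no_two_cycle (hPair : PairAx E) (hFound : SetFoundationAx E) {a b : X}
    (hab : E a b) (hba : E b a) : False := by
  obtain ⟨s, hs⟩ := hPair a b
  obtain ⟨y, hy, hmin⟩ := hFound s ⟨a, (hs a).2 (Or.inl rfl)⟩
  rcases (hs y).1 hy with rfl | rfl
  · exact hmin b hba ((hs b).2 (Or.inr rfl))
  · exact hmin a hab ((hs a).2 (Or.inl rfl))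

/-- `Δ₀` induction on the internal `ω`. -/
lemma omega_ind (hSep : SeparationScheme E Delta0C) {w : X} (hw : IsOmega E w)
    {k : ℕ} (χ : SF (k+1)) (hχ : χ.IsDelta0) (p : Fin k → X)
    (h0 : ∀ e, E e w → (∀ z, ¬ E z e) → χ.Eval E (Fin.snoc p e))
    (hs : ∀ x s, E x w → E s w → SuccOf E x s → χ.Eval E (Fin.snoc p x) →
      χ.Eval E (Fin.snoc p s)) :
    ∀ x, E x w → χ.Eval E (Fin.snoc p x) := by
  obtain ⟨s₀, hs₀⟩ := hSep k χ hχ p w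
  have hind : InductiveSet E s₀ := by
    constructor
    · obtain ⟨e, hew, he⟩ := hw.1.1
      exact ⟨e, (hs₀ e).2 ⟨hew, h0 e hew he⟩, he⟩
    · intro x hx
      obtain ⟨hxw, hxχ⟩ := (hs₀ x).1 hx
      obtain ⟨s, hsw, hsucc⟩ := hw.1.2 x hxw
      exact ⟨s, (hs₀ s).2 ⟨hsw, hs x s hxw hsw hsucc hxχ⟩, hsucc⟩
  intro x hx
  exact ((hs₀ x).1 (hw.2 s₀ hind x hx)).2

end Model

section OmegaFacts

variable {E : X → X → Prop} {w : X}

/-- `x` is transitive. -/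
def chiTrans : SF 1 :=
  .ballMem ⟨0, by omega⟩ (.ballMem ⟨1, by omega⟩ (.mem ⟨2, by omega⟩ ⟨0, by omega⟩))

lemma chiTrans_eval (p : Fin 0 → X) (x : X) :
    chiTrans.Eval E (Fin.snoc p x) ↔ TransSet E x := by
  simp [chiTrans, SF.Eval, TransSet, Fin.snoc]

lemma nat_trans (hSep : SeparationScheme E Delta0C) (hw : IsOmega E w) :
    ∀ x, E x w → TransSet E x := by
  intro x hx
  rw [← chiTrans_eval (fun i => i.elim0)]
  refine omega_ind hSep hw chiTrans (by repeat' constructor) _ ?_ ?_ x hx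
  · intro e _ he
    rw [chiTrans_eval]
    intro y hy
    exact absurd hy (he y)
  · intro a s _ _ hsucc ha
    rw [chiTrans_eval] at ha ⊢
    intro y hys z hzy
    rcases (hsucc y).1 hys with h | rfl
    · exact (hsucc z).2 (Or.inl (ha y h z hzy))
    · exact (hsucc z).2 (Or.inl hzy)

/-- `x ⊆ w` (for the parameter in slot 0). -/
def chiSubP : SF 2 := .ballMem ⟨1, by omega⟩ (.mem ⟨2, by omega⟩ ⟨0, by omega⟩)

lemma chiSubP_eval (p : Fin 1 → X) (x : X) :
    chiSubP.Eval E (Fin.snoc p x) ↔ ∀ z, E z x → E z (p 0) := by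
  simp only [chiSubP, SF.Eval]
  constructor <;> intro h z hz <;> exact h z hz

lemma w_trans (hSep : SeparationScheme E Delta0C) (hw : IsOmega E w) :
    ∀ x, E x w → ∀ z, E z x → E z w := by
  have key := omega_ind hSep hw chiSubP (by repeat' constructor) (fun _ : Fin 1 => w) ?_ ?_
  · intro x hx
    exact (chiSubP_eval _ _).mp (key x hx)
  · intro e _ he
    rw [chiSubP_eval]
    intro z hz
    exact absurd hz (he z)
  · intro a s haw _ hsucc ha
    rw [chiSubP_eval] at ha ⊢
    intro z hz
    rcases (hsucc z).1 hz with h | rfl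
    · exact ha z h
    · exact haw

/-- `x` is empty or has an empty member. -/
def chiZero : SF 1 :=
  .or (.ballMem ⟨0, by omega⟩ (.not (.eq ⟨1, by omega⟩ ⟨1, by omega⟩)))
    (.bexMem ⟨0, by omega⟩ (.ballMem ⟨1, by omega⟩ (.not (.eq ⟨2, by omega⟩ ⟨2, by omega⟩))))

lemma chiZero_eval (p : Fin 0 → X) (x : X) :
    chiZero.Eval E (Fin.snoc p x) ↔ ((∀ z, ¬ E z x) ∨ ∃ z, E z x ∧ ∀ t, ¬ E t z) := by
  simp [chiZero, SF.Eval, Fin.snoc]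

lemma zero_in (hSep : SeparationScheme E Delta0C) (hw : IsOmega E w) :
    ∀ x, E x w → ((∀ z, ¬ E z x) ∨ ∃ z, E z x ∧ ∀ t, ¬ E t z) := by
  intro x hx
  rw [← chiZero_eval (fun i => i.elim0)]
  refine omega_ind hSep hw chiZero (by repeat' constructor) _ ?_ ?_ x hx
  · intro e _ he
    rw [chiZero_eval]
    exact Or.inl he
  · intro a s _ _ hsucc ha
    rw [chiZero_eval] at ha ⊢
    rcases ha with ha | ⟨z, hz, hze⟩
    · exact Or.inr ⟨a, (hsucc a).2 (Or.inr rfl), ha⟩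
    · exact Or.inr ⟨z, (hsucc z).2 (Or.inl hz), hze⟩

/-- `∀ d ∈ w (d ⊆ x → d ∈ x ∨ d = x)`, parameter `w` in slot 0. -/
def chiSubOrd : SF 2 :=
  .ballMem ⟨0, by omega⟩ (.or (.not (.ballMem ⟨2, by omega⟩ (.mem ⟨3, by omega⟩ ⟨1, by omega⟩)))
    (.or (.mem ⟨2, by omega⟩ ⟨1, by omega⟩) (.eq ⟨2, by omega⟩ ⟨1, by omega⟩)))

lemma chiSubOrd_eval (p : Fin 1 → X) (x : X) :
    chiSubOrd.Eval E (Fin.snoc p x) ↔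
      ∀ d, E d (p 0) → (∀ z, E z d → E z x) → (E d x ∨ d = x) := by
  simp [chiSubOrd, SF.Eval, Fin.snoc, -not_forall]
  constructor
  · intro h d hd hsub
    rcases h d hd with h' | h'
    · exact absurd hsub h'
    · exact h'
  · intro h d hd
    by_cases hsub : ∀ z, E z d → E z x
    · exact Or.inr (h d hd hsub)
    · exact Or.inl hsub

lemma sub_ord (hExt : ExtensionalityAx E) (hSep : SeparationScheme E Delta0C)
    (hw : IsOmega E w) :
    ∀ x, E x w → ∀ d, E d w → (∀ z, E z d → E z x) → (E d x ∨ d = x) := by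
  have key := omega_ind hSep hw chiSubOrd (by repeat' constructor) (fun _ : Fin 1 => w) ?_ ?_
  · intro x hx
    exact (chiSubOrd_eval _ _).mp (key x hx)
  · intro e _ he
    rw [chiSubOrd_eval]
    intro d _ hsub
    right
    exact hExt d e fun z => ⟨fun hz => hsub z hz, fun hz => absurd hz (he z)⟩
  · intro a s haw _ hsucc ha
    rw [chiSubOrd_eval] at ha ⊢
    intro d hd hsub
    by_cases had : E a d
    · right
      refine hExt d s fun z => ⟨fun hz => hsub z hz, fun hz => ?_⟩
      rcases (hsucc z).1 hz with h | rfl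
      · exact nat_trans hSep hw d hd a had z h
      · exact had
    · have hdsuba : ∀ z, E z d → E z a := by
        intro z hz
        rcases (hsucc z).1 (hsub z hz) with h | rfl
        · exact h
        · exact absurd hz had
      rcases ha d hd hdsuba with h | rfl
      · exact Or.inl ((hsucc d).2 (Or.inl h))
      · exact Or.inl ((hsucc d).2 (Or.inr rfl))

/-- linearity: `∀ x ∈ w (x ∈ y ∨ x = y ∨ y ∈ x)`, parameter `w` in slot 0. -/
def chiLin : SF 2 :=
  .ballMem ⟨0, by omega⟩ (.or (.mem ⟨2, by omega⟩ ⟨1, by omega⟩)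
    (.or (.eq ⟨2, by omega⟩ ⟨1, by omega⟩) (.mem ⟨1, by omega⟩ ⟨2, by omega⟩)))

lemma chiLin_eval (p : Fin 1 → X) (y : X) :
    chiLin.Eval E (Fin.snoc p y) ↔
      ∀ x, E x (p 0) → (E x y ∨ x = y ∨ E y x) := by
  simp only [chiLin, SF.Eval]
  constructor <;> intro h x hx <;> simpa [Fin.snoc] using h x (by simpa [Fin.snoc] using hx)

lemma lin (hExt : ExtensionalityAx E) (hSep : SeparationScheme E Delta0C)
    (hw : IsOmega E w) :
    ∀ y, E y w → ∀ x, E x w → (E x y ∨ x = y ∨ E y x) := by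
  have key := omega_ind hSep hw chiLin (by repeat' constructor) (fun _ : Fin 1 => w) ?_ ?_
  · intro y hy
    exact (chiLin_eval _ _).mp (key y hy)
  · intro e hew he
    rw [chiLin_eval]
    intro x hxw
    rcases zero_in hSep hw x hxw with hx | ⟨z, hzx, hz⟩
    · right; left
      exact hExt x e fun t => ⟨fun ht => absurd ht (hx t), fun ht => absurd ht (he t)⟩
    · right; right
      have : e = z := hExt e z fun t => ⟨fun ht => absurd ht (he t), fun ht => absurd ht (hz t)⟩
      rw [this]; exact hzx
  · intro a s haw hsw hsucc ha
    rw [chiLin_eval] at ha ⊢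
    intro x hxw
    rcases ha x hxw with h | rfl | h
    · exact Or.inl ((hsucc x).2 (Or.inl h))
    · exact Or.inl ((hsucc x).2 (Or.inr rfl))
    · have hssubx : ∀ z, E z s → E z x := by
        intro z hz
        rcases (hsucc z).1 hz with h' | rfl
        · exact nat_trans hSep hw x hxw a h z h'
        · exact h
      rcases sub_ord hExt hSep hw x hxw s hsw hssubx with h' | h'
      · exact Or.inr (Or.inr h')
      · exact Or.inr (Or.inl h'.symm)

/-- `x` is empty or a successor. -/
def chiPred : SF 1 :=
  .or (.ballMem ⟨0, by omega⟩ (.not (.eq ⟨1, by omega⟩ ⟨1, by omega⟩)))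
    (.bexMem ⟨0, by omega⟩ (.and
      (.ballMem ⟨0, by omega⟩ (.or (.mem ⟨2, by omega⟩ ⟨1, by omega⟩) (.eq ⟨2, by omega⟩ ⟨1, by omega⟩)))
      (.ballMem ⟨1, by omega⟩ (.mem ⟨2, by omega⟩ ⟨0, by omega⟩))))

lemma chiPred_eval (p : Fin 0 → X) (x : X) :
    chiPred.Eval E (Fin.snoc p x) ↔
      ((∀ z, ¬ E z x) ∨ ∃ t, E t x ∧ (∀ z, E z x → (E z t ∨ z = t)) ∧ (∀ z, E z t → E z x)) := by
  simp [chiPred, SF.Eval, Fin.snoc]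

lemma nat_pred (hSep : SeparationScheme E Delta0C) (hw : IsOmega E w) :
    ∀ x, E x w → ((∀ z, ¬ E z x) ∨ ∃ t, E t x ∧ SuccOf E t x) := by
  intro x hx
  have := omega_ind hSep hw chiPred (by repeat' constructor) (fun i => i.elim0) ?_ ?_ x hx
  · rw [chiPred_eval] at this
    rcases this with h | ⟨t, ht, h1, h2⟩
    · exact Or.inl h
    · refine Or.inr ⟨t, ht, fun z => ⟨h1 z, fun hz => ?_⟩⟩
      rcases hz with hz | rfl
      · exact h2 z hz
      · exact ht
  · intro e _ he
    rw [chiPred_eval]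
    exact Or.inl he
  · intro a s _ _ hsucc _
    rw [chiPred_eval]
    refine Or.inr ⟨a, (hsucc a).2 (Or.inr rfl), fun z hz => (hsucc z).1 hz,
      fun z hz => (hsucc z).2 (Or.inl hz)⟩

end OmegaFacts

section PairFormula

variable {E : X → X → Prop}

/-- `v c = {v a}`. -/
def singF {m : ℕ} (c a : Fin m) : SF m :=
  .and (.ballMem c (.eq (Fin.last m) a.castSucc)) (.mem a c)

/-- `v c = {v a, v b}`. -/
def dubF {m : ℕ} (c a b : Fin m) : SF m :=
  .and (.mem a c) (.and (.mem b c)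
    (.ballMem c (.or (.eq (Fin.last m) a.castSucc) (.eq (Fin.last m) b.castSucc))))

/-- `v q = ⟨v a, v b⟩` (Kuratowski). -/
def pairF {m : ℕ} (q a b : Fin m) : SF m :=
  .and (.bexMem q (singF (Fin.last m) a.castSucc))
    (.and (.bexMem q (dubF (Fin.last m) a.castSucc b.castSucc))
      (.ballMem q (.or (singF (Fin.last m) a.castSucc)
        (dubF (Fin.last m) a.castSucc b.castSucc))))

lemma singF_eval {m : ℕ} (c a : Fin m) (v : Fin m → X) :
    (singF c a).Eval E v ↔ ((∀ t, E t (v c) → t = v a) ∧ E (v a) (v c)) := by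
  simp [singF, SF.Eval, Fin.snoc_last, Fin.snoc_castSucc]

lemma dubF_eval {m : ℕ} (c a b : Fin m) (v : Fin m → X) :
    (dubF c a b).Eval E v ↔
      (E (v a) (v c) ∧ E (v b) (v c) ∧ ∀ t, E t (v c) → (t = v a ∨ t = v b)) := by
  simp [dubF, SF.Eval, Fin.snoc_last, Fin.snoc_castSucc]

lemma pairF_eval (hExt : ExtensionalityAx E) (hPair : PairAx E) {m : ℕ}
    (q a b : Fin m) (v : Fin m → X) :
    (pairF q a b).Eval E v ↔ IsPair E (v q) (v a) (v b) := by
  have h1 : ∀ z : X, ((∀ t, E t z → t = v a) ∧ E (v a) z) ↔ (∀ t, E t z ↔ t = v a) := by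
    intro z
    constructor
    · rintro ⟨hz1, hz2⟩ t
      exact ⟨hz1 t, fun ht => ht ▸ hz2⟩
    · intro h
      exact ⟨fun t ht => (h t).1 ht, (h (v a)).2 rfl⟩
  have h2 : ∀ z : X, (E (v a) z ∧ E (v b) z ∧ ∀ t, E t z → (t = v a ∨ t = v b)) ↔
      (∀ t, E t z ↔ (t = v a ∨ t = v b)) := by
    intro z
    constructor
    · rintro ⟨hz1, hz2, hz3⟩ t
      refine ⟨hz3 t, ?_⟩
      rintro (rfl | rfl) <;> assumption
    · intro h
      exact ⟨(h (v a)).2 (Or.inl rfl), (h (v b)).2 (Or.inr rfl), fun t ht => (h t).1 ht⟩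
  simp only [pairF, SF.Eval, singF_eval, dubF_eval, Fin.snoc_last, Fin.snoc_castSucc]
  constructor
  · rintro ⟨⟨s, hsq, hs⟩, ⟨dd, hdq, hd⟩, hall⟩
    intro z
    constructor
    · intro hz
      rcases hall z hz with h | h
      · exact Or.inl ((h1 z).1 h)
      · exact Or.inr ((h2 z).1 h)
    · rintro (h | h)
      · have : z = s := hExt z s fun t =>
          ⟨fun ht => by rw [(h t).1 ht]; exact hs.2, fun ht => (h t).2 (hs.1 t ht)⟩
        rw [this]; exact hsq
      · have : z = dd := hExt z dd fun t =>
          ⟨fun ht => by rcases (h t).1 ht with rfl | rfl; exacts [hd.1, hd.2.1],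
           fun ht => (h t).2 (hd.2.2 t ht)⟩
        rw [this]; exact hdq
  · intro hip
    obtain ⟨s, hs⟩ := mkSing hPair (v a)
    obtain ⟨dd, hd⟩ := hPair (v a) (v b)
    refine ⟨⟨s, (hip s).2 (Or.inl fun t => hs t), (h1 s).2 fun t => hs t⟩,
      ⟨dd, (hip dd).2 (Or.inr fun t => hd t), (h2 dd).2 fun t => hd t⟩, ?_⟩
    intro z hz
    rcases (hip z).1 hz with h | h
    · exact Or.inl ((h1 z).2 h)
    · exact Or.inr ((h2 z).2 h)

lemma pair_has_dub (hPair : PairAx E) {q a b : X} (hp : IsPair E q a b) :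
    ∃ c, E c q ∧ E a c ∧ E b c := by
  obtain ⟨c, hc⟩ := hPair a b
  exact ⟨c, (hp c).2 (Or.inr fun t => hc t), (hc a).2 (Or.inl rfl), (hc b).2 (Or.inr rfl)⟩

lemma pairF_isDelta0 {m : ℕ} (q a b : Fin m) : (pairF q a b).IsDelta0 := by
  repeat' constructor

lemma pairF_isDelta0P {m : ℕ} (q a b : Fin m) : (pairF q a b).IsDelta0P := by
  repeat' constructor

attribute [irreducible] singF dubF pairF

end PairFormula

section Pigeon

variable {E : X → X → Prop}

/-- the class `{y : ∃ v u, g(y) = v, g(v) = u, u ∈ y}` with parameter `g` in slot 0. -/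
def chiDesc : SF 2 :=
  .bexMem ⟨0, by omega⟩ <| -- q = 2
   .bexMem ⟨2, by omega⟩ <| -- c = 3
    .bexMem ⟨3, by omega⟩ <| -- v = 4
     .bexMem ⟨0, by omega⟩ <| -- q2 = 5
      .bexMem ⟨5, by omega⟩ <| -- c2 = 6
       .bexMem ⟨6, by omega⟩ <| -- u = 7
        .and (pairF ⟨2, by omega⟩ ⟨1, by omega⟩ ⟨4, by omega⟩)
          (.and (pairF ⟨5, by omega⟩ ⟨4, by omega⟩ ⟨7, by omega⟩)
            (.mem ⟨7, by omega⟩ ⟨1, by omega⟩))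

set_option maxHeartbeats 2000000 in
lemma chiDesc_eval (hExt : ExtensionalityAx E) (hPair : PairAx E) (p : Fin 1 → X) (y : X) :
    chiDesc.Eval E (Fin.snoc p y) ↔
      ∃ q, E q (p 0) ∧ ∃ c, E c q ∧ ∃ v, E v c ∧ ∃ q2, E q2 (p 0) ∧ ∃ c2, E c2 q2 ∧
        ∃ u, E u c2 ∧ IsPair E q y v ∧ IsPair E q2 v u ∧ E u y := by
  simp only [chiDesc, SF.Eval, pairF_eval hExt hPair]
  simp (config := { decide := true }) only [snoc_val_lt, snoc_val_last]
  exact Iff.rfl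

lemma chiDesc_iff (hExt : ExtensionalityAx E) (hPair : PairAx E) (p : Fin 1 → X) (y : X) :
    chiDesc.Eval E (Fin.snoc p y) ↔
      ∃ q v q2 u, E q (p 0) ∧ E q2 (p 0) ∧ IsPair E q y v ∧ IsPair E q2 v u ∧ E u y := by
  rw [chiDesc_eval hExt hPair]
  constructor
  · rintro ⟨q, hq, c, _, v, _, q2, hq2, c2, _, u, _, hp1, hp2, huy⟩
    exact ⟨q, v, q2, u, hq, hq2, hp1, hp2, huy⟩
  · rintro ⟨q, v, q2, u, hq, hq2, hp1, hp2, huy⟩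
    obtain ⟨c, hcq, _, hvc⟩ := pair_has_dub hPair hp1
    obtain ⟨c2, hc2q, _, huc⟩ := pair_has_dub hPair hp2
    exact ⟨q, hq, c, hcq, v, hvc, q2, hq2, c2, hc2q, u, huc, hp1, hp2, huy⟩

/-- Pigeonhole: no order-anti-isomorphism of a transitive `P` onto a member `d` of `P`. -/
lemma pigeon (hExt : ExtensionalityAx E) (hPair : PairAx E)
    (hSep : SeparationScheme E Delta0C) (hFound : SetFoundationAx E)
    {P d g : X} (hTP : TransSet E P) (hdP : E d P)
    (hi : ∀ q, E q g → ∃ y v, IsPair E q y v ∧ E y P ∧ E v d)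
    (hii : ∀ y, E y P → ∃ q v, E q g ∧ IsPair E q y v)
    (hanti : ∀ q q' y v y' v', E q g → E q' g → IsPair E q y v → IsPair E q' y' v' →
      (E y y' ↔ E v' v)) : False := by
  -- every element of P has a value in d
  have hval : ∀ y, E y P → ∃ q v, E q g ∧ IsPair E q y v ∧ E v d := by
    intro y hy
    obtain ⟨q, v, hq, hp⟩ := hii y hy
    obtain ⟨y2, v2, hp2, _, hv2d⟩ := hi q hq
    obtain ⟨hy2, hv2⟩ := kpair_unique hExt hPair hp hp2
    exact ⟨q, v, hq, hp, hv2 ▸ hv2d⟩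
  obtain ⟨s, hs⟩ := hSep 1 chiDesc
    ⟨pairF_isDelta0 _ _ _, pairF_isDelta0 _ _ _, trivial⟩ (fun _ : Fin 1 => g) P
  have hmem : ∀ y, E y s ↔ (E y P ∧
      ∃ q v q2 u, E q g ∧ E q2 g ∧ IsPair E q y v ∧ IsPair E q2 v u ∧ E u y) := by
    intro y
    rw [hs y, chiDesc_iff hExt hPair]
  -- d ∈ s
  have hds : E d s := by
    obtain ⟨q, v, hq, hp, hvd⟩ := hval d hdP
    have hvP : E v P := hTP d hdP v hvd
    obtain ⟨q2, u, hq2, hp2, hud⟩ := hval v hvP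
    exact (hmem d).2 ⟨hdP, q, v, q2, u, hq, hq2, hp, hp2, hud⟩
  obtain ⟨y, hys, hymin⟩ := hFound s ⟨d, hds⟩
  obtain ⟨hyP, q, v, q2, u, hq, hq2, hp1, hp2, huy⟩ := (hmem y).1 hys
  -- u ∈ d hence u ∈ P
  have hud : E u d := by
    obtain ⟨y3, v3, hp3, _, hv3d⟩ := hi q2 hq2
    obtain ⟨h3, h4⟩ := kpair_unique hExt hPair hp2 hp3
    exact h4 ▸ hv3d
  have huP : E u P := hTP d hdP u hud
  obtain ⟨qu, vu, hqu, hpu, hvud⟩ := hval u huP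
  have hvuP : E vu P := hTP d hdP vu hvud
  obtain ⟨qv, uv, hqv, hpv, huvd⟩ := hval vu hvuP
  -- anti twice
  have h5 : E v vu := (hanti qu q u vu y v hqu hq hpu hp1).1 huy
  have h6 : E uv u := (hanti q2 qv v u vu uv hq2 hqv hp2 hpv).1 h5
  exact hymin u huy ((hmem u).2 ⟨huP, qu, vu, qv, uv, hqu, hqv, hpu, hpv, h6⟩)

end Pigeon

section Monster

/- Variable layout for the main Σ₁^𝒫-formula, in context `SF (n+9)`:
   `0..n-1` : parameters `p`, `n` : `P`, `n+1` : `w`, `n+2` : `x` (main variable),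
   `n+3` : `u` (bounding set), `n+4` : `d`, `n+5` : `a`, `n+6` : `g`, `n+7` : `f`,
   `n+8` : `z`. -/

/-- the substitution sending `ψ`'s vars to `(p, d, z)`. -/
def rho1 (n : ℕ) : Fin (n+2) → Fin (n+9) := fun i =>
  if h : i.val < n then ⟨i.val, by omega⟩
  else if i.val = n then ⟨n+4, by omega⟩ else ⟨n+8, by omega⟩

/-- the substitution sending `ψ`'s vars to `(p, y, v)` at depth 13. -/
def rho2 (n : ℕ) : Fin (n+2) → Fin (n+13) := fun i =>
  if h : i.val < n then ⟨i.val, by omega⟩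
  else if i.val = n then ⟨n+9, by omega⟩ else ⟨n+12, by omega⟩

/-- `f` is a witness function on `d`: `∀ y ∈ d ∃ ⟨y,v⟩ ∈ f, ¬ψ(y,v)`. -/
def MFf (n : ℕ) (ψ : SF (n+2)) : SF (n+9) :=
  .ballMem ⟨n+4, by omega⟩ <| -- y = n+9
   .bexMem ⟨n+7, by omega⟩ <| -- q = n+10
    .bexMem ⟨n+10, by omega⟩ <| -- c = n+11
     .bexMem ⟨n+11, by omega⟩ <| -- v = n+12
      .and (pairF ⟨n+10, by omega⟩ ⟨n+9, by omega⟩ ⟨n+12, by omega⟩)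
        (.not (ψ.rename (rho2 n)))

/-- every member of `g` is a pair `⟨y,v⟩` with `y ∈ P ∖ x`, `v ∈ d`. -/
def MGi (n : ℕ) : SF (n+9) :=
  .ballMem ⟨n+6, by omega⟩ <| -- q = n+9
   .bexMem ⟨n+9, by omega⟩ <| -- c = n+10
    .bexMem ⟨n+10, by omega⟩ <| -- y = n+11
     .bexMem ⟨n+9, by omega⟩ <| -- c2 = n+12
      .bexMem ⟨n+12, by omega⟩ <| -- v = n+13
       .and (pairF ⟨n+9, by omega⟩ ⟨n+11, by omega⟩ ⟨n+13, by omega⟩)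
         (.and (.mem ⟨n+11, by omega⟩ ⟨n, by omega⟩)
           (.and (.not (.mem ⟨n+11, by omega⟩ ⟨n+2, by omega⟩))
             (.mem ⟨n+13, by omega⟩ ⟨n+4, by omega⟩)))

/-- `g` is defined on all of `P ∖ x`. -/
def MGii (n : ℕ) : SF (n+9) :=
  .ballMem ⟨n, by omega⟩ <| -- y = n+9
   .or (.mem ⟨n+9, by omega⟩ ⟨n+2, by omega⟩)
    (.bexMem ⟨n+6, by omega⟩ <| -- q = n+10
      .bexMem ⟨n+10, by omega⟩ <| -- c = n+11
       .bexMem ⟨n+11, by omega⟩ <| -- v = n+12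
        pairF ⟨n+10, by omega⟩ ⟨n+9, by omega⟩ ⟨n+12, by omega⟩)

/-- `g` is an anti-isomorphism: `y ∈ y' ↔ v' ∈ v` for pairs `⟨y,v⟩, ⟨y',v'⟩ ∈ g`. -/
def MGv (n : ℕ) : SF (n+9) :=
  .ballMem ⟨n+6, by omega⟩ <| -- q = n+9
   .ballMem ⟨n+6, by omega⟩ <| -- q' = n+10
    .not <|
     .bexMem ⟨n+9, by omega⟩ <| -- c = n+11
      .bexMem ⟨n+11, by omega⟩ <| -- y = n+12
       .bexMem ⟨n+9, by omega⟩ <| -- c2 = n+13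
        .bexMem ⟨n+13, by omega⟩ <| -- v = n+14
         .bexMem ⟨n+10, by omega⟩ <| -- c3 = n+15
          .bexMem ⟨n+15, by omega⟩ <| -- y' = n+16
           .bexMem ⟨n+10, by omega⟩ <| -- c4 = n+17
            .bexMem ⟨n+17, by omega⟩ <| -- v' = n+18
             .and (pairF ⟨n+9, by omega⟩ ⟨n+12, by omega⟩ ⟨n+14, by omega⟩)
              (.and (pairF ⟨n+10, by omega⟩ ⟨n+16, by omega⟩ ⟨n+18, by omega⟩)
               (.or (.and (.mem ⟨n+12, by omega⟩ ⟨n+16, by omega⟩)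
                      (.not (.mem ⟨n+18, by omega⟩ ⟨n+14, by omega⟩)))
                 (.and (.not (.mem ⟨n+12, by omega⟩ ⟨n+16, by omega⟩))
                   (.mem ⟨n+18, by omega⟩ ⟨n+14, by omega⟩))))

def MM (n : ℕ) (ψ : SF (n+2)) : SF (n+9) :=
  .and (.not (ψ.rename (rho1 n))) (.and (MFf n ψ) (.and (MGi n) (.and (MGii n) (MGv n))))

def Wbody (n : ℕ) (ψ : SF (n+2)) : SF (n+4) :=
  .bexMem ⟨n+1, by omega⟩ <| -- d = n+4, d ∈ w
   .bexMem ⟨n+3, by omega⟩ <| -- a = n+5, a ∈ u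
    .bexMem ⟨n+5, by omega⟩ <| -- g = n+6, g ∈ a
     .bexMem ⟨n+5, by omega⟩ <| -- f = n+7, f ∈ a
      .bexMem ⟨n+5, by omega⟩ <| -- z = n+8, z ∈ a
       MM n ψ

lemma Wbody_isDelta0P {n : ℕ} {ψ : SF (n+2)} (hψ : ψ.IsDelta0P) :
    (Wbody n ψ).IsDelta0P := by
  repeat' first
    | exact isDelta0P_rename _ _ hψ
    | exact pairF_isDelta0P _ _ _
    | constructor

variable {E : X → X → Prop}

lemma snoc_disc_lt {m : ℕ} (v : Fin m → X) (t : X) {j : ℕ} (h' : j < m + 1) (h : j < m) :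
    (Fin.snoc v t : Fin (m+1) → X) ⟨j, h'⟩ = v ⟨j, h⟩ :=
  snoc_val_lt v t j h h'

lemma snoc_disc_last {m : ℕ} (v : Fin m → X) (t : X) {j : ℕ} (h' : j < m + 1) (h : j = m) :
    (Fin.snoc v t : Fin (m+1) → X) ⟨j, h'⟩ = t := by
  subst h
  exact snoc_val_last v t h'

lemma snoc_add_lt {n m k : ℕ} (v : Fin (n+m) → X) (t : X) (h' : n+k < n+m+1) (h : k < m) :
    (Fin.snoc v t : Fin (n+m+1) → X) ⟨n+k, h'⟩ = v ⟨n+k, by omega⟩ :=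
  snoc_val_lt v t (n+k) (by omega) h'

lemma snoc_add_last {n m : ℕ} (v : Fin (n+m) → X) (t : X) (h' : n+m < n+m+1) :
    (Fin.snoc v t : Fin (n+m+1) → X) ⟨n+m, h'⟩ = t :=
  snoc_val_last v t h'

lemma snoc_add_self {n m : ℕ} (v : Fin (n+m) → X) (t : X) (h' : n < n+m+1) (h : 0 < m) :
    (Fin.snoc v t : Fin (n+m+1) → X) ⟨n, h'⟩ = v ⟨n, by omega⟩ :=
  snoc_val_lt v t n (by omega) h'

lemma snoc_base_last {n : ℕ} (v : Fin n → X) (t : X) (h' : n < n+1) :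
    (Fin.snoc v t : Fin (n+1) → X) ⟨n, h'⟩ = t :=
  snoc_val_last v t h'

lemma comp_rho1 {n : ℕ} (p : Fin n → X) (P w x u d a g f z : X) :
    (Fin.snoc (Fin.snoc (Fin.snoc (Fin.snoc (Fin.snoc (Fin.snoc (Fin.snoc (Fin.snoc
      (Fin.snoc p P : Fin (n+1) → X) w : Fin (n+2) → X) x : Fin (n+3) → X)
      u : Fin (n+4) → X) d : Fin (n+5) → X) a : Fin (n+6) → X) g : Fin (n+7) → X)
      f : Fin (n+8) → X) z : Fin (n+9) → X) ∘ rho1 n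
      = Fin.snoc (Fin.snoc p d : Fin (n+1) → X) z := by
  funext i
  rcases i with ⟨iv, hiv⟩
  by_cases h1 : iv < n
  · have hr : rho1 n ⟨iv, hiv⟩ = ⟨iv, by omega⟩ := by simp [rho1, h1]
    rw [Function.comp_apply, hr]
    simp (disch := omega) only [snoc_val_lt]
  · by_cases h2 : iv = n
    · have hr : rho1 n ⟨iv, hiv⟩ = ⟨n+4, by omega⟩ := by
        unfold rho1
        rw [dif_neg (show ¬(iv < n) from h1), if_pos (show iv = n from h2)]
      have hi' : (⟨iv, hiv⟩ : Fin (n+2)) = ⟨n, by omega⟩ := Fin.ext h2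
      rw [Function.comp_apply, hr, hi']
      simp (disch := omega) only [snoc_val_lt, snoc_val_last]
    · have hr : rho1 n ⟨iv, hiv⟩ = ⟨n+8, by omega⟩ := by
        unfold rho1
        rw [dif_neg (show ¬(iv < n) from h1), if_neg (show ¬(iv = n) from h2)]
      have hi' : (⟨iv, hiv⟩ : Fin (n+2)) = ⟨n+1, by omega⟩ := by
        apply Fin.ext
        show iv = n + 1
        omega
      rw [Function.comp_apply, hr, hi']
      simp (disch := omega) only [snoc_val_lt, snoc_val_last]

lemma comp_rho2 {n : ℕ} (p : Fin n → X) (P w x u d a g f z y q c v : X) :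
    (Fin.snoc (Fin.snoc (Fin.snoc (Fin.snoc (Fin.snoc (Fin.snoc (Fin.snoc (Fin.snoc
      (Fin.snoc (Fin.snoc (Fin.snoc (Fin.snoc
      (Fin.snoc p P : Fin (n+1) → X) w : Fin (n+2) → X) x : Fin (n+3) → X)
      u : Fin (n+4) → X) d : Fin (n+5) → X) a : Fin (n+6) → X) g : Fin (n+7) → X)
      f : Fin (n+8) → X) z : Fin (n+9) → X) y : Fin (n+10) → X) q : Fin (n+11) → X)
      c : Fin (n+12) → X) v : Fin (n+13) → X) ∘ rho2 n
      = Fin.snoc (Fin.snoc p y : Fin (n+1) → X) v := by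
  funext i
  rcases i with ⟨iv, hiv⟩
  by_cases h1 : iv < n
  · have hr : rho2 n ⟨iv, hiv⟩ = ⟨iv, by omega⟩ := by simp [rho2, h1]
    rw [Function.comp_apply, hr]
    simp (disch := omega) only [snoc_val_lt]
  · by_cases h2 : iv = n
    · have hr : rho2 n ⟨iv, hiv⟩ = ⟨n+9, by omega⟩ := by
        unfold rho2
        rw [dif_neg (show ¬(iv < n) from h1), if_pos (show iv = n from h2)]
      have hi' : (⟨iv, hiv⟩ : Fin (n+2)) = ⟨n, by omega⟩ := Fin.ext h2
      rw [Function.comp_apply, hr, hi']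
      simp (disch := omega) only [snoc_val_lt, snoc_val_last]
    · have hr : rho2 n ⟨iv, hiv⟩ = ⟨n+12, by omega⟩ := by
        unfold rho2
        rw [dif_neg (show ¬(iv < n) from h1), if_neg (show ¬(iv = n) from h2)]
      have hi' : (⟨iv, hiv⟩ : Fin (n+2)) = ⟨n+1, by omega⟩ := by
        apply Fin.ext
        show iv = n + 1
        omega
      rw [Function.comp_apply, hr, hi']
      simp (disch := omega) only [snoc_val_lt, snoc_val_last]

/-- The raw (bounded) semantic reading of the main formula. -/
def BW {n : ℕ} (E : X → X → Prop) (ψ : SF (n+2)) (p : Fin n → X) (P w x : X) : Prop :=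
  ∃ u d, E d w ∧ ∃ a, E a u ∧ ∃ g, E g a ∧ ∃ f, E f a ∧ ∃ z, E z a ∧
   ((¬ ψ.Eval E (Fin.snoc (Fin.snoc p d) z)) ∧
    (∀ y, E y d → ∃ q, E q f ∧ ∃ c, E c q ∧ ∃ v, E v c ∧
      (IsPair E q y v ∧ ¬ ψ.Eval E (Fin.snoc (Fin.snoc p y) v))) ∧
    (∀ q, E q g → ∃ c, E c q ∧ ∃ y, E y c ∧ ∃ c2, E c2 q ∧ ∃ v, E v c2 ∧
      (IsPair E q y v ∧ E y P ∧ ¬ E y x ∧ E v d)) ∧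
    (∀ y, E y P → (E y x ∨ ∃ q, E q g ∧ ∃ c, E c q ∧ ∃ v, E v c ∧ IsPair E q y v)) ∧
    (∀ q, E q g → ∀ q', E q' g →
      ¬ ∃ c, E c q ∧ ∃ y, E y c ∧ ∃ c2, E c2 q ∧ ∃ v, E v c2 ∧ ∃ c3, E c3 q' ∧
        ∃ y', E y' c3 ∧ ∃ c4, E c4 q' ∧ ∃ v', E v' c4 ∧
          (IsPair E q y v ∧ IsPair E q' y' v' ∧
            ((E y y' ∧ ¬ E v' v) ∨ (¬ E y y' ∧ E v' v)))))

set_option maxHeartbeats 3000000 in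
lemma Wex_eval (hExt : ExtensionalityAx E) (hPair : PairAx E) {n : ℕ} (ψ : SF (n+2))
    (p : Fin n → X) (P w x : X) :
    (SF.ex (Wbody n ψ)).Eval E
        (Fin.snoc (Fin.snoc (Fin.snoc p P : Fin (n+1) → X) w : Fin (n+2) → X) x) ↔
      BW E ψ p P w x := by
  simp only [SF.Eval, Wbody, MM, MFf, MGi, MGii, MGv, eval_rename,
    pairF_eval hExt hPair, BW]
  simp (disch := omega) only [snoc_disc_lt, snoc_disc_last, comp_rho1, comp_rho2]

/-- The clean semantic reading of the main formula. -/
def CW {n : ℕ} (E : X → X → Prop) (ψ : SF (n+2)) (p : Fin n → X) (P w x : X) : Prop :=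
  ∃ d, E d w ∧ ∃ g f z,
    (¬ ψ.Eval E (Fin.snoc (Fin.snoc p d) z)) ∧
    (∀ y, E y d → ∃ q v, E q f ∧ IsPair E q y v ∧
      ¬ ψ.Eval E (Fin.snoc (Fin.snoc p y) v)) ∧
    (∀ q, E q g → ∃ y v, IsPair E q y v ∧ E y P ∧ ¬ E y x ∧ E v d) ∧
    (∀ y, E y P → ¬ E y x → ∃ q v, E q g ∧ IsPair E q y v) ∧
    (∀ q q' y v y' v', E q g → E q' g → IsPair E q y v → IsPair E q' y' v' →
      (E y y' ↔ E v' v))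

lemma BW_iff_CW (hExt : ExtensionalityAx E) (hPair : PairAx E) (hUnion : UnionAx E)
    {n : ℕ} (ψ : SF (n+2)) (p : Fin n → X) (P w x : X) :
    BW E ψ p P w x ↔ CW E ψ p P w x := by
  constructor
  · rintro ⟨u, d, hdw, a, hau, g, hga, f, hfa, z, hza, hpsi, hFW, hGI, hGII, hGV⟩
    refine ⟨d, hdw, g, f, z, hpsi, ?_, ?_, ?_, ?_⟩
    · intro y hyd
      obtain ⟨q, hqf, c, hcq, v, hvc, hp, hnp⟩ := hFW y hyd
      exact ⟨q, v, hqf, hp, hnp⟩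
    · intro q hqg
      obtain ⟨c, hcq, y, hyc, c2, hc2, v, hvc2, hp, hyP, hyx, hvd⟩ := hGI q hqg
      exact ⟨y, v, hp, hyP, hyx, hvd⟩
    · intro y hyP hyx
      rcases hGII y hyP with h | ⟨q, hqg, c, hcq, v, hvc, hp⟩
      · exact absurd h hyx
      · exact ⟨q, v, hqg, hp⟩
    · intro q q' y v y' v' hq hq' hp hp'
      by_contra hiff
      refine hGV q hq q' hq' ?_
      obtain ⟨c, hcq, hyc, hvc⟩ := pair_has_dub hPair hp
      obtain ⟨c', hcq', hyc', hvc'⟩ := pair_has_dub hPair hp'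
      refine ⟨c, hcq, y, hyc, c, hcq, v, hvc, c', hcq', y', hyc', c', hcq', v', hvc',
        hp, hp', ?_⟩
      rcases Classical.em (E y y') with h1 | h1 <;> rcases Classical.em (E v' v) with h2 | h2
      · exact absurd (iff_of_true h1 h2) hiff
      · exact Or.inl ⟨h1, h2⟩
      · exact Or.inr ⟨h1, h2⟩
      · exact absurd (iff_of_false h1 h2) hiff
  · rintro ⟨d, hdw, g, f, z, hpsi, hFW, hGI, hGII, hGV⟩
    obtain ⟨t1, ht1⟩ := hPair g f
    obtain ⟨a, ha⟩ := mkAdjoin hPair hUnion t1 z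
    obtain ⟨u, hu⟩ := mkSing hPair a
    have hga : E g a := (ha g).2 (Or.inl ((ht1 g).2 (Or.inl rfl)))
    have hfa : E f a := (ha f).2 (Or.inl ((ht1 f).2 (Or.inr rfl)))
    have hza : E z a := (ha z).2 (Or.inr rfl)
    refine ⟨u, d, hdw, a, (hu a).2 rfl, g, hga, f, hfa, z, hza, hpsi, ?_, ?_, ?_, ?_⟩
    · intro y hyd
      obtain ⟨q, v, hqf, hp, hnp⟩ := hFW y hyd
      obtain ⟨c, hcq, hyc, hvc⟩ := pair_has_dub hPair hp
      exact ⟨q, hqf, c, hcq, v, hvc, hp, hnp⟩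
    · intro q hqg
      obtain ⟨y, v, hp, hyP, hyx, hvd⟩ := hGI q hqg
      obtain ⟨c, hcq, hyc, hvc⟩ := pair_has_dub hPair hp
      exact ⟨c, hcq, y, hyc, c, hcq, v, hvc, hp, hyP, hyx, hvd⟩
    · intro y hyP
      by_cases hyx : E y x
      · exact Or.inl hyx
      · obtain ⟨q, v, hqg, hp⟩ := hGII y hyP hyx
        obtain ⟨c, hcq, hyc, hvc⟩ := pair_has_dub hPair hp
        exact Or.inr ⟨q, hqg, c, hcq, v, hvc, hp⟩
    · rintro q hq q' hq'
        ⟨c, hcq, y, hyc, c2, hc2, v, hvc2, c3, hc3, y', hyc3, c4, hc4, v', hvc4, hp, hp', hxor⟩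
      have hif := hGV q q' y v y' v' hq hq' hp hp'
      rcases hxor with ⟨h1, h2⟩ | ⟨h1, h2⟩
      · exact h2 (hif.1 h1)
      · exact h1 (hif.2 h2)

end Monster

/-- over `M⁻`, `Σ₁^𝒫`-Foundation on `ω` implies `Π₁^𝒫`-Foundation on `ω`. -/
theorem pi1P_foundation_omega_of_sigma1P (X : Type u) (E : X → X → Prop)
    (hM : ModelMminus E) (w : X) (hw : IsOmega E w)
    (hSi : ∀ (n : ℕ) (φ : SF (n + 1)), Sigma1PC _ φ → ∀ p : Fin n → X,
      (∃ x, E x w ∧ φ.Eval E (Fin.snoc p x)) →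
      ∃ y, E y w ∧ φ.Eval E (Fin.snoc p y) ∧
        ∀ x, E x w → φ.Eval E (Fin.snoc p x) → ¬ E x y) :
    ∀ (n : ℕ) (φ : SF (n + 1)), Pi1PC _ φ → ∀ p : Fin n → X,
      (∃ x, E x w ∧ φ.Eval E (Fin.snoc p x)) →
      ∃ y, E y w ∧ φ.Eval E (Fin.snoc p y) ∧
        ∀ x, E x w → φ.Eval E (Fin.snoc p x) → ¬ E x y := by
  obtain ⟨hExt, hEmpty, hPair, hUnion, hDiff, hTCo, hInf, hSep, hFound⟩ := hM
  intro n φ hφ p hex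
  obtain ⟨ψ, hψ, rfl⟩ := hφ
  by_contra hcon
  push_neg at hcon
  obtain ⟨P, hPw, hPsat⟩ := hex
  simp only [SF.Eval] at hPsat hcon
  -- the empty set of the model
  obtain ⟨e, hew, hee⟩ := hw.1.1
  -- `P` belongs to the Σ₁^𝒫 class
  have hCWP : CW E ψ p P w P := by
    have hnphi : ¬ ∀ z', ψ.Eval E (Fin.snoc (Fin.snoc p e) z') := by
      intro h
      obtain ⟨x', hx'w, _, hx'e⟩ := hcon e hew h
      exact hee x' hx'e
    obtain ⟨z0, hz0⟩ := not_forall.1 hnphi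
    exact ⟨e, hew, e, e, z0, hz0,
      fun y hy => absurd hy (hee y),
      fun q hq => absurd hq (hee q),
      fun y hyP hyI => absurd hyP hyI,
      fun q q' y v y' v' hq _ _ _ => absurd hq (hee q)⟩
  have hCWiff : ∀ x, (SF.ex (Wbody n ψ)).Eval E
      (Fin.snoc (Fin.snoc (Fin.snoc p P) w) x) ↔ CW E ψ p P w x := fun x =>
    (Wex_eval hExt hPair ψ p P w x).trans (BW_iff_CW hExt hPair hUnion ψ p P w x)
  obtain ⟨x₀, hx₀w, hx₀sat, hx₀min⟩ := hSi (n+2) (SF.ex (Wbody n ψ))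
    ⟨Wbody n ψ, Wbody_isDelta0P hψ, rfl⟩ (Fin.snoc (Fin.snoc p P) w)
    ⟨P, hPw, (hCWiff P).2 hCWP⟩
  have hCW0 : CW E ψ p P w x₀ := (hCWiff x₀).1 hx₀sat
  have hmin : ∀ x, E x w → CW E ψ p P w x → ¬ E x x₀ := fun x hxw hcw =>
    hx₀min x hxw ((hCWiff x).2 hcw)
  obtain ⟨d₀, hd₀w, g₀, f₀, z₀, hψd, hFW, hGI, hGII, hGV⟩ := hCW0
  have hTP := nat_trans hSep hw P hPw
  rcases lin hExt hSep hw P hPw d₀ hd₀w with hdP | hdP | hPd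
  · -- main case : E d₀ P
    rcases nat_pred hSep hw x₀ hx₀w with hx₀e | ⟨x₁, hx₁x₀, hsucc⟩
    · -- x₀ is empty: `g₀` anti-embeds `P` onto `d₀ ∈ P`, contradiction by pigeonhole
      refine pigeon hExt hPair hSep hFound hTP hdP ?_ ?_ hGV
      · intro q hq
        obtain ⟨y, v, hp, hyP, _, hvd⟩ := hGI q hq
        exact ⟨y, v, hp, hyP, hvd⟩
      · intro y hyP
        exact hGII y hyP (hx₀e y)
    · -- x₀ = x₁ + 1 : then x₁ also belongs to the class, contradicting minimality
      have hx₁w : E x₁ w := w_trans hSep hw x₀ hx₀w x₁ hx₁x₀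
      have hPx₀ : ¬ E P x₀ := fun h => hmin P hPw hCWP h
      have hx₁P : E x₁ P := by
        rcases lin hExt hSep hw P hPw x₀ hx₀w with h | h | h
        · exact hTP x₀ h x₁ hx₁x₀
        · rw [← h]; exact hx₁x₀
        · exact absurd h hPx₀
      obtain ⟨d', hd'w, hsd⟩ := hw.1.2 d₀ hd₀w
      have hnphi : ¬ ∀ z', ψ.Eval E (Fin.snoc (Fin.snoc p d') z') := by
        intro h
        obtain ⟨a', ha'w, hφa, had⟩ := hcon d' hd'w h
        rcases (hsd a').1 had with h' | rfl
        · obtain ⟨q, v, _, _, hnp⟩ := hFW a' h'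
          exact hnp (hφa v)
        · exact hψd (hφa z₀)
      obtain ⟨z', hz'⟩ := not_forall.1 hnphi
      obtain ⟨Q1, hQ1⟩ := mkKPair hExt hPair d₀ z₀
      obtain ⟨f', hf'⟩ := mkAdjoin hPair hUnion f₀ Q1
      obtain ⟨Q2, hQ2⟩ := mkKPair hExt hPair x₁ d₀
      obtain ⟨g', hg'⟩ := mkAdjoin hPair hUnion g₀ Q2
      have hCW1 : CW E ψ p P w x₁ := by
        refine ⟨d', hd'w, g', f', z', hz', ?_, ?_, ?_, ?_⟩
        · intro y hyd
          rcases (hsd y).1 hyd with h' | rfl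
          · obtain ⟨q, v, hqf, hp, hnp⟩ := hFW y h'
            exact ⟨q, v, (hf' q).2 (Or.inl hqf), hp, hnp⟩
          · exact ⟨Q1, z₀, (hf' Q1).2 (Or.inr rfl), hQ1, hψd⟩
        · intro q hq
          rcases (hg' q).1 hq with h' | rfl
          · obtain ⟨y, v, hp, hyP, hyx, hvd⟩ := hGI q h'
            exact ⟨y, v, hp, hyP, fun h => hyx ((hsucc y).2 (Or.inl h)),
              (hsd v).2 (Or.inl hvd)⟩
          · exact ⟨x₁, d₀, hQ2, hx₁P, no_self_mem hPair hFound x₁,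
              (hsd d₀).2 (Or.inr rfl)⟩
        · intro y hyP hyx₁
          by_cases hyeq : y = x₁
          · exact ⟨Q2, d₀, (hg' Q2).2 (Or.inr rfl), hyeq ▸ hQ2⟩
          · have hyx₀ : ¬ E y x₀ := by
              intro h
              rcases (hsucc y).1 h with h' | h'
              · exact hyx₁ h'
              · exact hyeq h'
            obtain ⟨q, v, hq, hp⟩ := hGII y hyP hyx₀
            exact ⟨q, v, (hg' q).2 (Or.inl hq), hp⟩
        · intro q q' y v y' v' hq hq' hp hp'
          rcases (hg' q).1 hq with holdq | rfl <;>
            rcases (hg' q').1 hq' with holdq' | heq'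
          · exact hGV q q' y v y' v' holdq holdq' hp hp'
          · -- q' = Q2 : ⟨y', v'⟩ = ⟨x₁, d₀⟩
            obtain ⟨hy', hv'⟩ := kpair_unique hExt hPair hp' (heq' ▸ hQ2)
            obtain ⟨y₂, v₂, hp₂, hy₂P, hy₂x₀, hv₂d⟩ := hGI q holdq
            obtain ⟨hyy₂, hvv₂⟩ := kpair_unique hExt hPair hp hp₂
            refine iff_of_false ?_ ?_
            · intro h
              exact (hyy₂ ▸ hy₂x₀) ((hsucc y).2 (Or.inl (hy' ▸ h)))
            · intro h
              exact no_two_cycle hPair hFound (hvv₂ ▸ hv₂d) (hv' ▸ h)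
          · -- q = Q2 : ⟨y, v⟩ = ⟨x₁, d₀⟩, q' old
            obtain ⟨hy, hv⟩ := kpair_unique hExt hPair hp hQ2
            obtain ⟨y₂, v₂, hp₂, hy₂P, hy₂x₀, hv₂d⟩ := hGI q' holdq'
            obtain ⟨h1, h2⟩ := kpair_unique hExt hPair hp' hp₂
            refine iff_of_true ?_ (by rw [h2, hv]; exact hv₂d)
            rw [hy]
            have hy'w : E y' w := w_trans hSep hw P hPw y' (h1 ▸ hy₂P)
            rcases lin hExt hSep hw y' hy'w x₁ hx₁w with h | h | h
            · exact h
            · exfalso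
              exact (h1 ▸ hy₂x₀) (h ▸ hx₁x₀)
            · exfalso
              exact (h1 ▸ hy₂x₀) ((hsucc y').2 (Or.inl h))
          · -- both new
            obtain ⟨hy, hv⟩ := kpair_unique hExt hPair hp hQ2
            obtain ⟨hy', hv'⟩ := kpair_unique hExt hPair hp' (heq' ▸ hQ2)
            refine iff_of_false ?_ ?_
            · intro h
              rw [hy, hy'] at h
              exact no_self_mem hPair hFound x₁ h
            · intro h
              rw [hv, hv'] at h
              exact no_self_mem hPair hFound d₀ h
      exact hmin x₁ hx₁w hCW1 hx₁x₀
  · -- d₀ = P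
    exact hψd (by rw [hdP]; exact hPsat z₀)
  · -- E P d₀
    obtain ⟨q, v, _, _, hnp⟩ := hFW P hPd
    exact hnp (hPsat v)
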